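/- For all real numbers R > 0, s ∈ [0,R], and 0 < k ≤ k′, the normalized hyperbolic ratios are monotone in the frequency: cosh(k′s)/cosh(k′R) ≤ cosh(ks)/cosh(kR) and sinh(k′s)/sinh(k′R) ≤ sinh(ks)/sinh(kR). -/

import Mathlib

open Real Set

/-- `sinh x ≤ x * cosh x` for `0 ≤ x`. -/
lemma aux_sinh_le_mul_cosh {x : ℝ} (hx : 0 ≤ x) : Real.sinh x ≤ x * Real.cosh x := by
  have hmono : MonotoneOn (fun t : ℝ => t * Real.cosh t - Real.sinh t) (Set.Ici 0) := by
    apply monotoneOn_of_deriv_nonneg (convex_Ici 0)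
    · exact (Continuous.mul continuous_id Real.continuous_cosh).sub
        Real.continuous_sinh |>.continuousOn
    · intro t ht
      exact (((hasDerivAt_id t).mul (Real.hasDerivAt_cosh t)).sub
        (Real.hasDerivAt_sinh t)).differentiableAt.differentiableWithinAt
    · intro t ht
      rw [interior_Ici, Set.mem_Ioi] at ht
      have hd : HasDerivAt (fun t : ℝ => t * Real.cosh t - Real.sinh t)
          (1 * Real.cosh t + t * Real.sinh t - Real.cosh t) t :=
        ((hasDerivAt_id t).mul (Real.hasDerivAt_cosh t)).sub (Real.hasDerivAt_sinh t)
      rw [hd.deriv]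
      have : 0 ≤ t * Real.sinh t :=
        mul_nonneg ht.le (Real.sinh_nonneg_iff.mpr ht.le)
      linarith
  have h0 : (0 : ℝ) ∈ Set.Ici (0 : ℝ) := Set.mem_Ici.mpr le_rfl
  have := hmono h0 (Set.mem_Ici.mpr hx) hx
  simp only [Real.sinh_zero, Real.cosh_zero, mul_one, zero_mul, sub_zero] at this
  linarith

/-- `b * sinh a ≤ a * sinh b` for `0 ≤ a ≤ b`. -/
lemma aux_mul_sinh_le {a b : ℝ} (ha : 0 ≤ a) (hab : a ≤ b) :
    b * Real.sinh a ≤ a * Real.sinh b := by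
  have hmono : MonotoneOn (fun x : ℝ => a * Real.sinh x - x * Real.sinh a) (Set.Ici a) := by
    apply monotoneOn_of_deriv_nonneg (convex_Ici a)
    · exact ((continuous_const.mul Real.continuous_sinh).sub
        (continuous_id.mul continuous_const)).continuousOn
    · intro x hx
      exact (((Real.hasDerivAt_sinh x).const_mul a).sub
        ((hasDerivAt_id x).mul_const (Real.sinh a))).differentiableAt.differentiableWithinAt
    · intro x hx
      rw [interior_Ici, Set.mem_Ioi] at hx
      have hd : HasDerivAt (fun x : ℝ => a * Real.sinh x - x * Real.sinh a)
          (a * Real.cosh x - 1 * Real.sinh a) x :=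
        ((Real.hasDerivAt_sinh x).const_mul a).sub ((hasDerivAt_id x).mul_const (Real.sinh a))
      rw [hd.deriv]
      have h1 : Real.sinh a ≤ a * Real.cosh a := aux_sinh_le_mul_cosh ha
      have h2 : Real.cosh a ≤ Real.cosh x := by
        rw [Real.cosh_le_cosh, abs_of_nonneg ha, abs_of_nonneg (ha.trans hx.le)]
        exact hx.le
      nlinarith
  have := hmono (Set.mem_Ici.mpr le_rfl) (Set.mem_Ici.mpr hab) hab
  simp only at this
  linarith

theorem hyperbolic_ratio_monotone
    (R s k k' : ℝ) (hR : 0 < R) (hs : s ∈ Set.Icc (0 : ℝ) R)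
    (hk : 0 < k) (hkk' : k ≤ k') :
    Real.cosh (k' * s) / Real.cosh (k' * R) ≤ Real.cosh (k * s) / Real.cosh (k * R) ∧
    Real.sinh (k' * s) / Real.sinh (k' * R) ≤ Real.sinh (k * s) / Real.sinh (k * R) := by
  obtain ⟨hs0, hsR⟩ := hs
  -- derivatives of t ↦ sinh (t*s) etc.
  have hds : ∀ (c t : ℝ), HasDerivAt (fun t : ℝ => Real.sinh (t * c))
      (Real.cosh (t * c) * c) t := fun c t => by
    simpa [Function.comp_def] using (Real.hasDerivAt_sinh (t * c)).comp t ((hasDerivAt_id t).mul_const c)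
  have hdc : ∀ (c t : ℝ), HasDerivAt (fun t : ℝ => Real.cosh (t * c))
      (Real.sinh (t * c) * c) t := fun c t => by
    simpa [Function.comp_def] using (Real.hasDerivAt_cosh (t * c)).comp t ((hasDerivAt_id t).mul_const c)
  -- key product-to-sum facts at a point t > 0
  have key : ∀ t : ℝ, 0 < t →
      (s * Real.sinh (t * s) * Real.cosh (t * R) ≤ R * Real.cosh (t * s) * Real.sinh (t * R)) ∧
      (s * Real.cosh (t * s) * Real.sinh (t * R) ≤ R * Real.sinh (t * s) * Real.cosh (t * R)) := by
    intro t ht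
    have e1 : Real.sinh (t * R + t * s)
        = Real.sinh (t * R) * Real.cosh (t * s) + Real.cosh (t * R) * Real.sinh (t * s) :=
      Real.sinh_add _ _
    have e2 : Real.sinh (t * R - t * s)
        = Real.sinh (t * R) * Real.cosh (t * s) - Real.cosh (t * R) * Real.sinh (t * s) :=
      Real.sinh_sub _ _
    have hS1 : 0 ≤ Real.sinh (t * R + t * s) :=
      Real.sinh_nonneg_iff.mpr (by nlinarith)
    have hS2 : 0 ≤ Real.sinh (t * R - t * s) :=
      Real.sinh_nonneg_iff.mpr (by nlinarith)
    have hkey : (t * R + t * s) * Real.sinh (t * R - t * s)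
        ≤ (t * R - t * s) * Real.sinh (t * R + t * s) :=
      aux_mul_sinh_le (by nlinarith) (by nlinarith)
    have h' : (R + s) * Real.sinh (t * R - t * s)
        ≤ (R - s) * Real.sinh (t * R + t * s) := by
      nlinarith [hkey, ht]
    rw [e1, e2] at h'
    constructor
    · nlinarith
    · nlinarith [h']
  constructor
  · -- cosh part
    have hanti : AntitoneOn (fun t : ℝ => Real.cosh (t * s) / Real.cosh (t * R))
        (Set.Icc k k') := by
      apply antitoneOn_of_deriv_nonpos (convex_Icc k k')
      · exact (Real.continuous_cosh.comp (continuous_id.mul continuous_const)).continuousOn.div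
          (Real.continuous_cosh.comp (continuous_id.mul continuous_const)).continuousOn
          (fun t _ => (Real.cosh_pos _).ne')
      · intro t ht
        exact (((hdc s t).div (hdc R t) (Real.cosh_pos _).ne')).differentiableAt.differentiableWithinAt
      · intro t ht
        rw [interior_Icc, Set.mem_Ioo] at ht
        have htpos : 0 < t := hk.trans ht.1
        have hd := (hdc s t).div (hdc R t) (Real.cosh_pos (x := t * R)).ne'
        rw [show (fun t : ℝ => Real.cosh (t * s) / Real.cosh (t * R)) = (fun t : ℝ => Real.cosh (t * s)) / (fun t : ℝ => Real.cosh (t * R)) from rfl, hd.deriv]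
        apply div_nonpos_of_nonpos_of_nonneg _ (sq_nonneg _)
        have := (key t htpos).1
        nlinarith
    have h1 : k ∈ Set.Icc k k' := ⟨le_rfl, hkk'⟩
    have h2 : k' ∈ Set.Icc k k' := ⟨hkk', le_rfl⟩
    have := hanti h1 h2 hkk'
    simpa [mul_comm] using this
  · -- sinh part
    have hanti : AntitoneOn (fun t : ℝ => Real.sinh (t * s) / Real.sinh (t * R))
        (Set.Icc k k') := by
      apply antitoneOn_of_deriv_nonpos (convex_Icc k k')
      · apply ContinuousOn.div
          (Real.continuous_sinh.comp (continuous_id.mul continuous_const)).continuousOn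
          (Real.continuous_sinh.comp (continuous_id.mul continuous_const)).continuousOn
        intro t htm
        exact (Real.sinh_pos_iff.mpr (mul_pos (hk.trans_le htm.1) hR)).ne'
      · intro t ht
        rw [interior_Icc, Set.mem_Ioo] at ht
        have htpos : 0 < t := hk.trans ht.1
        exact ((hds s t).div (hds R t)
          (Real.sinh_pos_iff.mpr (mul_pos htpos hR)).ne').differentiableAt.differentiableWithinAt
      · intro t ht
        rw [interior_Icc, Set.mem_Ioo] at ht
        have htpos : 0 < t := hk.trans ht.1
        have hd := (hds s t).div (hds R t)
          (Real.sinh_pos_iff.mpr (mul_pos htpos hR)).ne'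
        rw [show (fun t : ℝ => Real.sinh (t * s) / Real.sinh (t * R)) = (fun t : ℝ => Real.sinh (t * s)) / (fun t : ℝ => Real.sinh (t * R)) from rfl, hd.deriv]
        apply div_nonpos_of_nonpos_of_nonneg _ (sq_nonneg _)
        have := (key t htpos).2
        nlinarith
    have h1 : k ∈ Set.Icc k k' := ⟨le_rfl, hkk'⟩
    have h2 : k' ∈ Set.Icc k k' := ⟨hkk', le_rfl⟩
    have := hanti h1 h2 hkk'
    simpa [mul_comm] using this
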